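/- For $p \ge 2$ there exists a constant $c_p \in (0,1]$ such that for all complex numbers $u, v$, $C_p(u,v) := |u|^p - |u-v|^p - p|u-v|^{p-2}\,\mathrm{Re}((u-v)\overline{v}) \ge c_p |v|^p$. In particular, $C_p(u,v) = 0$ if and only if $v = 0$. -/

import Mathlib

noncomputable def Cfun (p : ℝ) (u v : ℂ) : ℝ :=
  ‖u‖ ^ p - ‖u - v‖ ^ p - p * ‖u - v‖ ^ (p - 2) * ((u - v) * (starRingEnd ℂ) v).re

/-- Superadditivity of `x ↦ x ^ p` for `p ≥ 1` on nonnegative reals. -/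
lemma rpow_superadd {x y p : ℝ} (hx : 0 ≤ x) (hy : 0 ≤ y) (hp : 1 ≤ p) :
    x ^ p + y ^ p ≤ (x + y) ^ p := by
  have hp0 : (0 : ℝ) ≤ p - 1 := by linarith
  have hxy : 0 ≤ x + y := by linarith
  have h1 : x ^ p ≤ x * (x + y) ^ (p - 1) := by
    calc x ^ p = x ^ (1 + (p - 1)) := by ring_nf
    _ = x ^ (1 : ℝ) * x ^ (p - 1) := Real.rpow_add_of_nonneg hx zero_le_one hp0
    _ = x * x ^ (p - 1) := by rw [Real.rpow_one]
    _ ≤ x * (x + y) ^ (p - 1) :=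
        mul_le_mul_of_nonneg_left (Real.rpow_le_rpow hx (by linarith) hp0) hx
  have h2 : y ^ p ≤ y * (x + y) ^ (p - 1) := by
    calc y ^ p = y ^ (1 + (p - 1)) := by ring_nf
    _ = y ^ (1 : ℝ) * y ^ (p - 1) := Real.rpow_add_of_nonneg hy zero_le_one hp0
    _ = y * y ^ (p - 1) := by rw [Real.rpow_one]
    _ ≤ y * (x + y) ^ (p - 1) :=
        mul_le_mul_of_nonneg_left (Real.rpow_le_rpow hy (by linarith) hp0) hy
  calc x ^ p + y ^ p ≤ (x + y) * (x + y) ^ (p - 1) := by linarith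
  _ = (x + y) ^ (1 : ℝ) * (x + y) ^ (p - 1) := by rw [Real.rpow_one]
  _ = (x + y) ^ (1 + (p - 1)) := (Real.rpow_add_of_nonneg hxy zero_le_one hp0).symm
  _ = (x + y) ^ p := by ring_nf

/-- Midpoint convexity of `x ↦ x ^ p` for `p ≥ 1` on nonnegative reals. -/
lemma rpow_midpoint {x y p : ℝ} (hx : 0 ≤ x) (hy : 0 ≤ y) (hp : 1 ≤ p) :
    ((x + y) / 2) ^ p ≤ (x ^ p + y ^ p) / 2 := by
  have h := (convexOn_rpow hp).2 (Set.mem_Ici.2 hx) (Set.mem_Ici.2 hy)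
    (by norm_num : (0:ℝ) ≤ (1:ℝ)/2) (by norm_num : (0:ℝ) ≤ (1:ℝ)/2) (by norm_num)
  simp only [smul_eq_mul] at h
  calc ((x + y) / 2) ^ p = (1/2 * x + 1/2 * y) ^ p := by ring_nf
  _ ≤ 1/2 * x ^ p + 1/2 * y ^ p := h
  _ = (x ^ p + y ^ p) / 2 := by ring

/-- Tangent line inequality for `t ↦ t ^ p`, `p ≥ 1`. -/
lemma rpow_tangent {s t p : ℝ} (hs : 0 ≤ s) (ht : 0 ≤ t) (hp : 2 ≤ p) :
    s ^ p + p * s ^ (p - 1) * (t - s) ≤ t ^ p := by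
  have hp1 : (1:ℝ) ≤ p := by linarith
  rcases eq_or_lt_of_le hs with h | h
  · -- s = 0
    have hs0 : s = 0 := h.symm
    subst hs0
    rw [Real.zero_rpow (by positivity), Real.zero_rpow (by linarith : p - 1 ≠ 0)]
    simpa using Real.rpow_nonneg ht p
  · -- s > 0
    have hx : (-1 : ℝ) ≤ t / s - 1 := by
      have : 0 ≤ t / s := div_nonneg ht h.le
      linarith
    have hb := one_add_mul_self_le_rpow_one_add hx hp1
    have h1 : (1 : ℝ) + (t / s - 1) = t / s := by ring
    rw [h1] at hb
    -- hb : 1 + p * (t/s - 1) ≤ (t/s)^p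
    have hsp : 0 < s ^ p := Real.rpow_pos_of_pos h p
    have hdiv : (t / s) ^ p = t ^ p / s ^ p := Real.div_rpow ht h.le p
    rw [hdiv] at hb
    have hb2 : (1 + p * (t / s - 1)) * s ^ p ≤ t ^ p := (le_div_iff₀ hsp).mp hb
    have hkey : s ^ p * (1 + p * (t / s - 1)) = s ^ p + p * s ^ (p - 1) * (t - s) := by
      have hsplit : s ^ p = s * s ^ (p - 1) := by
        rw [← Real.rpow_one_add' hs (by linarith : (1:ℝ) + (p-1) ≠ 0)]
        ring_nf
      rw [hsplit]
      field_simp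
    nlinarith [hb2, hkey]

/-- First-order (tangent) inequality for the complex norm to the `p`. -/
lemma norm_rpow_tangent {p : ℝ} (hp : 2 ≤ p) (a w : ℂ) :
    ‖a‖ ^ p + p * ‖a‖ ^ (p - 2) * (a * (starRingEnd ℂ) w).re ≤ ‖a + w‖ ^ p := by
  rcases eq_or_ne a 0 with rfl | ha
  · simp only [norm_zero, zero_mul, Complex.zero_re, mul_zero, zero_add]
    rw [Real.zero_rpow (by positivity)]
    simpa using Real.rpow_nonneg (norm_nonneg w) p
  · have hna : 0 < ‖a‖ := norm_pos_iff.2 ha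
    have htan := rpow_tangent hna.le (norm_nonneg (a + w)) hp
    have hre : (a * (starRingEnd ℂ) (a + w)).re ≤ ‖a‖ * ‖a + w‖ := by
      calc (a * (starRingEnd ℂ) (a + w)).re ≤ ‖a * (starRingEnd ℂ) (a + w)‖ :=
            Complex.re_le_norm _
      _ = ‖a‖ * ‖a + w‖ := by
          rw [norm_mul, Complex.norm_conj]
    have hexp : (a * (starRingEnd ℂ) (a + w)).re = ‖a‖ ^ (2:ℕ) + (a * (starRingEnd ℂ) w).re := by
      rw [map_add, mul_add]
      simp [Complex.mul_conj, Complex.normSq_eq_norm_sq, ← Complex.ofReal_pow]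
    have hre2 : (a * (starRingEnd ℂ) w).re ≤ ‖a‖ * (‖a + w‖ - ‖a‖) := by
      have : (‖a‖:ℝ) ^ (2:ℕ) = ‖a‖ * ‖a‖ := sq ‖a‖
      nlinarith [hexp, hre]
    have hsplit : ‖a‖ ^ (p - 1) = ‖a‖ * ‖a‖ ^ (p - 2) := by
      rw [← Real.rpow_one_add' hna.le (by linarith : (1:ℝ) + (p-2) ≠ 0)]
      ring_nf
    have hmul : p * ‖a‖ ^ (p - 2) * (a * (starRingEnd ℂ) w).re
        ≤ p * ‖a‖ ^ (p - 1) * (‖a + w‖ - ‖a‖) := by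
      rw [hsplit]
      have hc : 0 ≤ p * ‖a‖ ^ (p - 2) := by positivity
      calc p * ‖a‖ ^ (p - 2) * (a * (starRingEnd ℂ) w).re
          ≤ p * ‖a‖ ^ (p - 2) * (‖a‖ * (‖a + w‖ - ‖a‖)) :=
            mul_le_mul_of_nonneg_left hre2 hc
      _ = p * (‖a‖ * ‖a‖ ^ (p - 2)) * (‖a + w‖ - ‖a‖) := by ring
    linarith

/-- Main strong-convexity bound: `‖a+b‖^p ≥ ‖a‖^p + p‖a‖^{p-2} Re(a b̄) + 2^{1-p}‖b‖^p`. -/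
lemma key_bound {p : ℝ} (hp : 2 ≤ p) (a b : ℂ) :
    ‖a‖ ^ p + p * ‖a‖ ^ (p - 2) * (a * (starRingEnd ℂ) b).re + (2:ℝ) ^ (1 - p) * ‖b‖ ^ p
      ≤ ‖a + b‖ ^ p := by
  set X : ℂ := a + b / 2 with hX
  set Y : ℂ := b / 2 with hY
  have hXY1 : X + Y = a + b := by rw [hX, hY]; ring
  have hXY2 : X - Y = a := by rw [hX, hY]; ring
  have hr : (1:ℝ) ≤ p / 2 := by linarith
  have hA2 : (0:ℝ) ≤ ‖a + b‖ ^ (2:ℕ) := by positivity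
  have hB2 : (0:ℝ) ≤ ‖a‖ ^ (2:ℕ) := by positivity
  -- convert p-powers of norms to (p/2)-powers of squared norms
  have hconv : ∀ z : ℂ, ((‖z‖ ^ (2:ℕ) : ℝ)) ^ (p/2) = ‖z‖ ^ p := by
    intro z
    rw [← Real.rpow_natCast ‖z‖ 2, ← Real.rpow_mul (norm_nonneg z)]
    congr 1
    push_cast
    ring
  -- parallelogram law
  have hpar : ‖a + b‖ ^ (2:ℕ) + ‖a‖ ^ (2:ℕ) = 2 * (‖X‖ ^ (2:ℕ) + ‖Y‖ ^ (2:ℕ)) := by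
    have := parallelogram_law_with_norm ℝ X Y
    rw [hXY1, hXY2] at this
    simpa [pow_two] using this
  -- step 1: midpoint convexity (reversed)
  have h1 : 2 * ((‖X‖ ^ (2:ℕ) + ‖Y‖ ^ (2:ℕ) : ℝ)) ^ (p/2) ≤ ‖a + b‖ ^ p + ‖a‖ ^ p := by
    have hm := rpow_midpoint hA2 hB2 hr
    have hhalf : ((‖a + b‖ ^ (2:ℕ) + ‖a‖ ^ (2:ℕ) : ℝ)) / 2 = ‖X‖ ^ (2:ℕ) + ‖Y‖ ^ (2:ℕ) := by
      rw [hpar]; ring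
    rw [hhalf, hconv, hconv] at hm
    linarith
  -- step 2: superadditivity
  have h2 : ‖X‖ ^ p + ‖Y‖ ^ p ≤ ((‖X‖ ^ (2:ℕ) + ‖Y‖ ^ (2:ℕ) : ℝ)) ^ (p/2) := by
    have := rpow_superadd (by positivity : (0:ℝ) ≤ ‖X‖ ^ (2:ℕ))
      (by positivity : (0:ℝ) ≤ ‖Y‖ ^ (2:ℕ)) hr
    rwa [hconv, hconv] at this
  -- step 3: tangent at a in direction b/2
  have h3 := norm_rpow_tangent hp a (b / 2)
  rw [← hX] at h3
  have hre : (a * (starRingEnd ℂ) (b / 2)).re = (a * (starRingEnd ℂ) b).re / 2 := by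
    have e1 : a * (starRingEnd ℂ) (b / 2) = a * (starRingEnd ℂ) b / 2 := by
      rw [map_div₀, Complex.conj_ofNat]
      ring
    rw [e1, show ((2:ℂ)) = ((2:ℝ):ℂ) by norm_num, Complex.div_ofReal_re]
  rw [hre] at h3
  -- step 4: ‖Y‖^p = 2^{-p} ‖b‖^p
  have hYnorm : ‖Y‖ ^ p = (2:ℝ) ^ (-p) * ‖b‖ ^ p := by
    rw [hY]
    have : ‖(b/2 : ℂ)‖ = ‖b‖ / 2 := by
      rw [norm_div]
      norm_num
    rw [this, Real.div_rpow (norm_nonneg b) (by norm_num), Real.rpow_neg (by norm_num)]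
    field_simp
  have h2p : (2:ℝ) ^ (1 - p) = 2 * (2:ℝ) ^ (-p) := by
    rw [show (1:ℝ) - p = 1 + -p by ring, Real.rpow_add (by norm_num), Real.rpow_one]
  have h4 : (2:ℝ) ^ (1 - p) * ‖b‖ ^ p = 2 * ‖Y‖ ^ p := by
    rw [hYnorm, h2p]; ring
  linarith [h1, h2, h3, h4]

/-- Lower bound `C_p(u,v) ≥ c_p |v|^p` with `c_p ∈ (0,1]`, and the vanishing criterion. -/
theorem stmt3 (p : ℝ) (hp : 2 ≤ p) :
    ∃ c : ℝ, c ∈ Set.Ioc (0 : ℝ) 1 ∧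
      (∀ u v : ℂ, c * ‖v‖ ^ p ≤ Cfun p u v) ∧
      (∀ u v : ℂ, Cfun p u v = 0 ↔ v = 0) := by
  refine ⟨(2:ℝ) ^ (1 - p), ⟨Real.rpow_pos_of_pos (by norm_num) _, ?_⟩, ?_, ?_⟩
  · exact Real.rpow_le_one_of_one_le_of_nonpos (by norm_num) (by linarith)
  · intro u v
    have := key_bound hp (u - v) v
    rw [sub_add_cancel] at this
    unfold Cfun
    linarith
  · intro u v
    constructor
    · intro h0
      have hb := key_bound hp (u - v) v
      rw [sub_add_cancel] at hb
      have hC : Cfun p u v = ‖u‖ ^ p - ‖u - v‖ ^ p - p * ‖u - v‖ ^ (p - 2) *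
          ((u - v) * (starRingEnd ℂ) v).re := rfl
      have hle : (2:ℝ) ^ (1 - p) * ‖v‖ ^ p ≤ 0 := by
        rw [hC] at h0; linarith
      have hpos : (0:ℝ) < (2:ℝ) ^ (1 - p) := Real.rpow_pos_of_pos (by norm_num) _
      have hv : ‖v‖ ^ p ≤ 0 := by
        by_contra hcon
        push_neg at hcon
        nlinarith
      have hv0 : ‖v‖ = 0 := by
        by_contra hcon
        have : 0 < ‖v‖ := lt_of_le_of_ne (norm_nonneg v) (Ne.symm hcon)
        have := Real.rpow_pos_of_pos this p
        linarith
      exact norm_eq_zero.mp hv0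
    · rintro rfl
      unfold Cfun
      simp
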